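/- The function $R_0(z) = \left(\frac{4\omega}{1+\sqrt{1-\beta}\,\cosh(2\sqrt{\omega}\,z)}\right)^{1/2}$ is twice differentiable on $\mathbb{R}$ and satisfies the ordinary differential equation $R_0''(z) - \omega R_0(z) + R_0(z)^3 + \alpha R_0(z)^5 = 0$ for all $z \in \mathbb{R}$. -/

import Mathlib

/-- The function
`R₀(z) = (4ω / (1 + √(1-β) cosh(2√ω z)))^(1/2)` (with `β = -16αω/3`, `0 ≤ β < 1`,
`ω > 0`) is twice differentiable on `ℝ` and satisfies
`R₀'' - ω R₀ + R₀³ + α R₀⁵ = 0`. -/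
theorem stmt0 (ω α β : ℝ) (hω : 0 < ω) (hβ : β = -(16 / 3) * α * ω)
    (hβ0 : 0 ≤ β) (hβ1 : β < 1)
    (R0 : ℝ → ℝ)
    (hR0 : ∀ z : ℝ, R0 z =
      Real.sqrt (4 * ω / (1 + Real.sqrt (1 - β) * Real.cosh (2 * Real.sqrt ω * z)))) :
    (Differentiable ℝ R0 ∧ Differentiable ℝ (deriv R0)) ∧
    ∀ z : ℝ, deriv (deriv R0) z - ω * R0 z + (R0 z) ^ 3 + α * (R0 z) ^ 5 = 0 := by
  set s : ℝ := Real.sqrt (4 * ω) with hs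
  set b : ℝ := Real.sqrt (1 - β) with hb
  set c : ℝ := 2 * Real.sqrt ω with hc
  have h1β : (0:ℝ) < 1 - β := by linarith
  have hb2 : b ^ 2 = 1 - β := Real.sq_sqrt h1β.le
  have hb0 : 0 < b := Real.sqrt_pos.2 h1β
  have hs2 : s ^ 2 = 4 * ω := Real.sq_sqrt (by linarith)
  have hc2 : c ^ 2 = 4 * ω := by
    have := Real.sq_sqrt hω.le
    rw [hc]; ring_nf; nlinarith [Real.sq_sqrt hω.le]
  have hD : ∀ z : ℝ, 0 < 1 + b * Real.cosh (c * z) := fun z => by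
    have h := Real.cosh_pos (x := c * z)
    positivity
  -- rewrite R0 in rpow form
  have hfun : R0 = fun z => s * (1 + b * Real.cosh (c * z)) ^ ((-1 : ℝ)/2) := by
    funext z
    rw [hR0 z, Real.sqrt_div (by positivity) _, div_eq_mul_inv,
      Real.sqrt_eq_rpow (1 + b * Real.cosh (c * z)), ← Real.rpow_neg (hD z).le,
      show -(1/2 : ℝ) = (-1:ℝ)/2 by norm_num]
  subst hfun
  clear hR0
  -- first derivative
  set F1 : ℝ → ℝ := fun z =>
    (s * (-(1:ℝ)/2) * (b * c) * Real.sinh (c * z)) *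
      (1 + b * Real.cosh (c * z)) ^ ((-3 : ℝ)/2) with hF1
  have hDz : ∀ z : ℝ, HasDerivAt (fun z => 1 + b * Real.cosh (c * z))
      (b * (Real.sinh (c * z) * (c * 1))) z := fun z =>
    ((((hasDerivAt_id z).const_mul c).cosh).const_mul b).const_add 1
  have hd1 : ∀ z : ℝ, HasDerivAt (fun z => s * (1 + b * Real.cosh (c * z)) ^ ((-1 : ℝ)/2))
      (F1 z) z := by
    intro z
    have h := ((hDz z).rpow_const (p := (-1:ℝ)/2) (Or.inl (hD z).ne')).const_mul s
    convert h using 1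
    · rfl
    · rfl
    rw [show ((-1:ℝ)/2 - 1 : ℝ) = (-3:ℝ)/2 by norm_num]
    ring
  -- second derivative
  set F2 : ℝ → ℝ := fun z =>
    s * (3/4) * (b*c)^2 * Real.sinh (c*z) ^ 2 * (1 + b * Real.cosh (c*z)) ^ ((-5 : ℝ)/2)
    + s * (-(1:ℝ)/2) * (b * c^2) * Real.cosh (c*z) *
        (1 + b * Real.cosh (c*z)) ^ ((-3 : ℝ)/2) with hF2
  have hd2 : ∀ z : ℝ, HasDerivAt F1 (F2 z) z := by
    intro z
    have hu : HasDerivAt (fun z => s * (-(1:ℝ)/2) * (b * c) * Real.sinh (c * z))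
        (s * (-(1:ℝ)/2) * (b * c) * (Real.cosh (c * z) * (c * 1))) z :=
      (((hasDerivAt_id z).const_mul c).sinh).const_mul (s * (-(1:ℝ)/2) * (b * c))
    have hv := (hDz z).rpow_const (p := (-3:ℝ)/2) (Or.inl (hD z).ne')
    have h := hu.mul hv
    convert h using 1
    · rfl
    · rfl
    · rfl
    rw [show ((-3:ℝ)/2 - 1 : ℝ) = (-5:ℝ)/2 by norm_num]
    ring
  have hdF : deriv (fun z => s * (1 + b * Real.cosh (c * z)) ^ ((-1 : ℝ)/2)) = F1 :=
    funext fun z => (hd1 z).deriv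
  refine ⟨⟨fun z => (hd1 z).differentiableAt, ?_⟩, ?_⟩
  · rw [hdF]; exact fun z => (hd2 z).differentiableAt
  intro z
  rw [hdF, (hd2 z).deriv]
  simp only [hF2]
  have hdpos : (0:ℝ) < 1 + b * Real.cosh (c * z) := hD z
  have hB : ((1 + b * Real.cosh (c * z)) ^ ((-1:ℝ)/2)) ^ (3:ℕ)
      = (1 + b * Real.cosh (c * z)) ^ ((-3:ℝ)/2) := by
    rw [← Real.rpow_natCast ((1 + b * Real.cosh (c * z)) ^ ((-1:ℝ)/2)) 3,
      ← Real.rpow_mul hdpos.le]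
    norm_num
  have hC : ((1 + b * Real.cosh (c * z)) ^ ((-1:ℝ)/2)) ^ (5:ℕ)
      = (1 + b * Real.cosh (c * z)) ^ ((-5:ℝ)/2) := by
    rw [← Real.rpow_natCast ((1 + b * Real.cosh (c * z)) ^ ((-1:ℝ)/2)) 5,
      ← Real.rpow_mul hdpos.le]
    norm_num
  have hA1 : ((1 + b * Real.cosh (c * z)) ^ ((-1:ℝ)/2)) ^ (2:ℕ)
      * (1 + b * Real.cosh (c * z)) = 1 := by
    rw [← Real.rpow_natCast ((1 + b * Real.cosh (c * z)) ^ ((-1:ℝ)/2)) 2,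
      ← Real.rpow_mul hdpos.le]
    norm_num
    rw [Real.rpow_neg_one]
    field_simp
  have hsh2 : Real.sinh (c * z) ^ 2 = Real.cosh (c * z) ^ 2 - 1 := Real.sinh_sq (c * z)
  rw [← hB, ← hC]
  set A : ℝ := (1 + b * Real.cosh (c * z)) ^ ((-1:ℝ)/2) with hA
  set ch : ℝ := Real.cosh (c * z) with hch
  set sh : ℝ := Real.sinh (c * z) with hsh
  linear_combination
    (s*A^5) * (((3/4)*b^2*sh^2 - (1/2)*b*ch*(1+b*ch)) * hc2
      + ((1+b*ch) + α*(s^2+4*ω)) * hs2 + (3*ω*b^2) * hsh2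
      + (-3*ω) * hb2 + (3*ω) * hβ)
    + s*((1/2)*b*c^2*ch*A^3 + ω*A*((1+b*ch)*A^2+1) - s^2*A^3) * hA1
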